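/- Let m ≥ 1, and for each j ∈ {1,…,m} let β_j > 0, ε_j > 0, α_j ∈ ℝ. Define f(t) = Σ_j (β_j + √(β_j² + 4β_j ε_j (α_j − t)))/(2(α_j − t)) − C for a constant C > 0, on the interval I = (−∞, min_j α_j). Then f is strictly increasing on I; in particular f'(t) = Σ_j (β_j/(2(α_j − t)²))·(1 + (1 + 2(ε_j/β_j)(α_j − t))/√(1 + 4(ε_j/β_j)(α_j − t))) > 0 for all t ∈ I. -/

import Mathlib

open Set Finset

lemma term_deriv (b e a t : ℝ) (hb : 0 < b) (he : 0 < e) (ht : t < a) :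
    HasDerivAt (fun t => (b + Real.sqrt (b ^ 2 + 4 * b * e * (a - t))) / (2 * (a - t)))
      ((b / (2 * (a - t) ^ 2)) *
        (1 + (1 + 2 * (e / b) * (a - t)) / Real.sqrt (1 + 4 * (e / b) * (a - t)))) t := by
  have hu : 0 < a - t := by linarith
  have hD : 0 < b ^ 2 + 4 * b * e * (a - t) := by positivity
  have h1 : HasDerivAt (fun t : ℝ => a - t) (-1) t := by
    simpa using (hasDerivAt_id t).const_sub a
  have h3 : HasDerivAt (fun t : ℝ => b ^ 2 + 4 * b * e * (a - t)) (4 * b * e * -1) t := by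
    simpa using ((h1.const_mul (4 * b * e)).const_add (b ^ 2))
  have hsq : HasDerivAt (fun t : ℝ => Real.sqrt (b ^ 2 + 4 * b * e * (a - t)))
      (4 * b * e * -1 / (2 * Real.sqrt (b ^ 2 + 4 * b * e * (a - t)))) t := h3.sqrt hD.ne'
  have hnum := hsq.const_add b
  have hden : HasDerivAt (fun t : ℝ => 2 * (a - t)) (2 * -1) t := h1.const_mul 2
  have hd := hnum.div hden (by positivity)
  convert hd using 1
  case e'_4 => exact rfl
  case e'_5 => exact rfl
  case e'_8 => exact rfl
  set s := Real.sqrt (b ^ 2 + 4 * b * e * (a - t)) with hs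
  have hs0 : 0 < s := Real.sqrt_pos.mpr hD
  have hs2 : s ^ 2 = b ^ 2 + 4 * b * e * (a - t) := Real.sq_sqrt hD.le
  have hsb : Real.sqrt (1 + 4 * (e / b) * (a - t)) = s / b := by
    rw [hs, eq_div_iff hb.ne', ← Real.sqrt_sq hb.le]
    rw [← Real.sqrt_mul (by positivity)]
    congr 1
    field_simp
    ring
    rw [Real.sq_sqrt (sq_nonneg b)]
  rw [hsb]
  field_simp
  linear_combination (-(2:ℝ)) * hs2

theorem stmt_6 (m : ℕ) (hm : 1 ≤ m) (β ε α : Fin m → ℝ)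
    (hβ : ∀ j, 0 < β j) (hε : ∀ j, 0 < ε j) (C : ℝ) (hC : 0 < C)
    (f : ℝ → ℝ)
    (hf : ∀ t, f t = (∑ j, (β j + Real.sqrt ((β j) ^ 2 + 4 * β j * ε j * (α j - t))) /
        (2 * (α j - t))) - C) :
    StrictMonoOn f (Iio (Finset.univ.inf' ⟨⟨0, hm⟩, Finset.mem_univ _⟩ α)) ∧
    ∀ t ∈ Iio (Finset.univ.inf' ⟨⟨0, hm⟩, Finset.mem_univ _⟩ α),
      HasDerivAt f (∑ j, (β j / (2 * (α j - t) ^ 2)) *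
          (1 + (1 + 2 * (ε j / β j) * (α j - t)) /
            Real.sqrt (1 + 4 * (ε j / β j) * (α j - t)))) t ∧
      0 < ∑ j, (β j / (2 * (α j - t) ^ 2)) *
          (1 + (1 + 2 * (ε j / β j) * (α j - t)) /
            Real.sqrt (1 + 4 * (ε j / β j) * (α j - t))) := by
  have hfe : f = fun t => (∑ j, (β j + Real.sqrt ((β j) ^ 2 + 4 * β j * ε j * (α j - t))) /
      (2 * (α j - t))) - C := funext hf
  set M := Finset.univ.inf' ⟨⟨0, hm⟩, Finset.mem_univ _⟩ α with hM
  have hlt : ∀ t ∈ Iio M, ∀ j, t < α j := by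
    intro t ht j
    exact lt_of_lt_of_le ht (Finset.inf'_le _ (Finset.mem_univ j))
  have hderiv : ∀ t ∈ Iio M, HasDerivAt f (∑ j, (β j / (2 * (α j - t) ^ 2)) *
      (1 + (1 + 2 * (ε j / β j) * (α j - t)) /
        Real.sqrt (1 + 4 * (ε j / β j) * (α j - t)))) t := by
    intro t ht
    rw [hfe]
    exact (HasDerivAt.fun_sum fun j _ =>
      term_deriv (β j) (ε j) (α j) t (hβ j) (hε j) (hlt t ht j)).sub_const C
  have hpos : ∀ t ∈ Iio M, 0 < ∑ j, (β j / (2 * (α j - t) ^ 2)) *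
      (1 + (1 + 2 * (ε j / β j) * (α j - t)) /
        Real.sqrt (1 + 4 * (ε j / β j) * (α j - t))) := by
    intro t ht
    apply Finset.sum_pos
    · intro j _
      have hu : 0 < α j - t := by linarith [hlt t ht j]
      have hb := hβ j; have he := hε j
      have h1 : (0:ℝ) < 1 + 4 * (ε j / β j) * (α j - t) := by positivity
      have h2 : (0:ℝ) < 1 + 2 * (ε j / β j) * (α j - t) := by positivity
      have h3 : 0 < Real.sqrt (1 + 4 * (ε j / β j) * (α j - t)) := Real.sqrt_pos.mpr h1
      positivity
    · exact ⟨⟨0, hm⟩, Finset.mem_univ _⟩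
  refine ⟨?_, fun t ht => ⟨hderiv t ht, hpos t ht⟩⟩
  apply strictMonoOn_of_deriv_pos (convex_Iio M)
  · intro t ht
    exact ((hderiv t ht).differentiableAt.continuousAt).continuousWithinAt
  · intro t ht
    rw [interior_Iio] at ht
    rw [(hderiv t ht).deriv]
    exact hpos t ht
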